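/- In the setting of the dense-step theorem — d a positive integer, Ω ⊆ Fin d, η ∈ (0,1], γ > 0, L > 0, β₀ ≥ 0, a probability space (S, μ), a random vector X : S → (Fin d → ℝ), an attribution map A : (Fin d → ℝ) → (Fin d → ℝ) with twice continuously differentiable coordinates, a measurable sign map s with values in {−1,1}^d, δ(x) := −ε·s(x), a set U ⊆ Ωᶜ with |U| ≥ η·(d − |Ω|) satisfying: for every i ∈ U, E[|⟨∇A_i(X), s(X)⟩|] ≥ γ; for every x and t ∈ [0,1] the second derivative of t ↦ A_i(x + t·δ(x)) is at most L·ε² in absolute value; E[|A_i(X)|] ≤ β₀; and integrability of all these random variables — let additionally A′ : Fin d → ℝ be a reference explanation with A′_i = 0 for every i ∉ Ω, and assume A_i(X + δ(X)) is integrable for every i ∈ Fin d. Then for every ε with 4β₀/γ ≤ ε ≤ γ/(2L), one has E[ Σ_{i ∈ Fin d} |A_i(X + δ(X)) − A′_i| ] ≥ (η·γ/2) · ε · (d − |Ω|). -/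

import Mathlib

open MeasureTheory

/-- Second-order Taylor bound on `[0,1]` for a `C²` function of one real variable. -/
theorem taylor_one_bound_aux {f : ℝ → ℝ} {C : ℝ} (hf : ContDiff ℝ 2 f)
    (hC : ∀ t ∈ Set.Icc (0:ℝ) 1, |deriv (deriv f) t| ≤ C) :
    |f 1 - f 0 - deriv f 0| ≤ C / 2 := by
  have hu : UniqueDiffOn ℝ (Set.Icc (0:ℝ) 1) := uniqueDiffOn_Icc one_pos
  have hdf : Differentiable ℝ f := hf.differentiable (by norm_num)
  have hdf2 : Differentiable ℝ (deriv f) := by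
    have h2 := (contDiff_succ_iff_deriv (n := 1)).mp (by exact_mod_cast hf)
    exact h2.2.2.differentiable (by norm_num)
  have h1 : Set.EqOn (iteratedDerivWithin 1 f (Set.Icc (0:ℝ) 1)) (deriv f) (Set.Icc (0:ℝ) 1) := by
    intro t ht
    rw [iteratedDerivWithin_one, (hdf t).derivWithin (hu t ht)]
  obtain ⟨x', hx', heq⟩ := taylor_mean_remainder_lagrange (n := 1) (x₀ := 0) (x := 1) zero_ne_one
    (by rw [Set.uIcc_of_le zero_le_one]; exact ((hf.of_le one_le_two).contDiffOn))
    (by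
      rw [Set.uIcc_of_le zero_le_one, Set.uIoo_of_le zero_le_one]
      exact ((hdf2.differentiableOn).congr fun t ht => h1 (Set.Ioo_subset_Icc_self ht)))
  rw [Set.uIcc_of_le zero_le_one] at heq
  rw [Set.uIoo_of_le zero_le_one] at hx'
  have hx'' : x' ∈ Set.Icc (0:ℝ) 1 := Set.Ioo_subset_Icc_self hx'
  have h2nd : iteratedDerivWithin 2 f (Set.Icc (0:ℝ) 1) x' = deriv (deriv f) x' := by
    rw [iteratedDerivWithin_succ,
      derivWithin_congr h1 (h1 hx''), (hdf2 x').derivWithin (hu x' hx'')]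
  rw [taylorWithinEval_succ, taylor_within_zero_eval, h2nd,
    h1 (Set.left_mem_Icc.mpr one_pos.le)] at heq
  norm_num at heq
  calc |f 1 - f 0 - deriv f 0| = |deriv (deriv f) x'| / 2 := by
        rw [sub_sub, heq, abs_div]; norm_num
    _ ≤ C / 2 := by gcongr; exact hC x' hx''

/-- **Dense ℓ∞ steps cannot match a reference explanation supported on the target region.**
In the setting of the dense-step theorem, if `A′` is a reference explanation vanishing
outside `Ω`, then for every admissible budget `ε ∈ [4β₀/γ, γ/(2L)]` the expected ℓ¹
mismatch between the adversarial attribution and `A′` is at least `(ηγ/2)·ε·(d − |Ω|)`. -/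
theorem dense_linf_step_mismatch_to_reference
    (d : ℕ) (hd : 0 < d) (Ω : Finset (Fin d))
    (η γ L β₀ : ℝ) (hη : 0 < η) (hη1 : η ≤ 1) (hγ : 0 < γ) (hL : 0 < L) (hβ₀ : 0 ≤ β₀)
    {S : Type*} [MeasurableSpace S] (μ : Measure S) [IsProbabilityMeasure μ]
    (X : S → (Fin d → ℝ)) (hX : Measurable X)
    (A : (Fin d → ℝ) → (Fin d → ℝ))
    (hA : ∀ i : Fin d, ContDiff ℝ 2 (fun x => A x i))
    (s : (Fin d → ℝ) → (Fin d → ℝ)) (hs : Measurable s)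
    (hsign : ∀ x j, s x j = 1 ∨ s x j = -1)
    (ε : ℝ) (hε : 0 < ε)
    (U : Finset (Fin d)) (hUΩ : U ⊆ Ωᶜ)
    (hUcard : η * ((d : ℝ) - Ω.card) ≤ U.card)
    -- (i) off-window directional sensitivity
    (hsens : ∀ i ∈ U,
      γ ≤ ∫ ω, |fderiv ℝ (fun x => A x i) (X ω) (s (X ω))| ∂μ)
    -- (ii) directional curvature bound along the dense step δ(x) = -ε • s x
    (hcurv : ∀ i ∈ U, ∀ x : Fin d → ℝ, ∀ t ∈ Set.Icc (0 : ℝ) 1,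
      |deriv (deriv (fun t' : ℝ => A (x + t' • ((-ε) • s x)) i)) t| ≤ L * ε ^ 2)
    -- (iii) bounded clean background magnitude
    (hclean : ∀ i ∈ U, ∫ ω, |A (X ω) i| ∂μ ≤ β₀)
    -- integrability of the random variables appearing above
    (hint1 : ∀ i ∈ U,
      Integrable (fun ω => fderiv ℝ (fun x => A x i) (X ω) (s (X ω))) μ)
    (hint2 : ∀ i ∈ U, Integrable (fun ω => A (X ω) i) μ)
    (hint3 : ∀ i : Fin d, Integrable (fun ω => A (X ω + (-ε) • s (X ω)) i) μ)
    -- reference explanation supported on Ω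
    (A' : Fin d → ℝ) (hA' : ∀ i ∉ Ω, A' i = 0)
    -- admissible budget range
    (hεlo : 4 * β₀ / γ ≤ ε) (hεhi : ε ≤ γ / (2 * L)) :
    (η * γ / 2) * ε * ((d : ℝ) - Ω.card) ≤
      ∫ ω, ∑ i : Fin d, |A (X ω + (-ε) • s (X ω)) i - A' i| ∂μ := by
  -- pointwise second-order bound
  have key : ∀ i ∈ U, ∀ x : Fin d → ℝ,
      ε * |fderiv ℝ (fun y => A y i) x (s x)| - |A x i| - L * ε ^ 2 / 2
        ≤ |A (x + (-ε) • s x) i| := by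
    intro i hi x
    set δ : Fin d → ℝ := (-ε) • s x with hδ
    set f : ℝ → ℝ := fun t => A (x + t • δ) i with hfdef
    have hfc : ContDiff ℝ 2 f := by
      exact (hA i).comp (contDiff_const.add ((contDiff_id (E := ℝ)).smul contDiff_const))
    have hg : HasDerivAt (fun t : ℝ => x + t • δ) δ 0 := by
      simpa using ((hasDerivAt_id (0:ℝ)).smul_const δ).const_add x
    have hF : HasDerivAt f (fderiv ℝ (fun y => A y i) x δ) 0 := by
      have hx0 : x + (0:ℝ) • δ = x := by simp
      have := (((hA i).differentiable (by norm_num) (x + (0:ℝ) • δ)).hasFDerivAt).comp_hasDerivAt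
        0 hg
      rwa [hx0] at this
    have hderiv0 : deriv f 0 = fderiv ℝ (fun y => A y i) x δ := hF.deriv
    have hsmul : fderiv ℝ (fun y => A y i) x δ = (-ε) * fderiv ℝ (fun y => A y i) x (s x) := by
      rw [hδ, _root_.map_smul, smul_eq_mul]
    have htay := taylor_one_bound_aux hfc (hcurv i hi x)
    have hf1 : f 1 = A (x + δ) i := by simp [hfdef]
    have hf0 : f 0 = A x i := by simp [hfdef]
    rw [hf1, hf0, hderiv0, hsmul] at htay
    set D := fderiv ℝ (fun y => A y i) x (s x) with hD
    have habs : |(-ε) * D| = ε * |D| := by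
      rw [abs_mul, abs_neg, abs_of_pos hε]
    have t1 := abs_sub_abs_le_abs_sub ((-ε) * D) (A (x + δ) i - A x i)
    have t2 : |(-ε) * D - (A (x + δ) i - A x i)| = |A (x + δ) i - A x i - (-ε) * D| :=
      abs_sub_comm _ _
    have t3 : |A (x + δ) i - A x i| ≤ |A (x + δ) i| + |A x i| := by
      calc |A (x + δ) i - A x i| = |A (x + δ) i + -(A x i)| := by rw [sub_eq_add_neg]
        _ ≤ |A (x + δ) i| + |-(A x i)| := abs_add_le _ _
        _ = |A (x + δ) i| + |A x i| := by rw [abs_neg]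
    rw [t2, habs] at t1
    linarith
  -- integral lower bound for each i ∈ U
  have hstep : ∀ i ∈ U, ε * γ / 2 ≤ ∫ ω, |A (X ω + (-ε) • s (X ω)) i| ∂μ := by
    intro i hi
    have hI1 : Integrable (fun ω => |fderiv ℝ (fun x => A x i) (X ω) (s (X ω))|) μ :=
      (hint1 i hi).abs
    have hI2 : Integrable (fun ω => |A (X ω) i|) μ := (hint2 i hi).abs
    have hI3 : Integrable (fun ω => |A (X ω + (-ε) • s (X ω)) i|) μ := (hint3 i).abs
    have hIm : Integrable (fun ω => ε * |fderiv ℝ (fun x => A x i) (X ω) (s (X ω))|) μ :=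
      hI1.const_mul ε
    have hIa : Integrable (fun ω => ε * |fderiv ℝ (fun x => A x i) (X ω) (s (X ω))|
        - |A (X ω) i|) μ := hIm.sub hI2
    have hmono : ∫ ω, (ε * |fderiv ℝ (fun x => A x i) (X ω) (s (X ω))|
        - |A (X ω) i| - L * ε ^ 2 / 2) ∂μ
        ≤ ∫ ω, |A (X ω + (-ε) • s (X ω)) i| ∂μ := by
      refine integral_mono (hIa.sub (integrable_const _)) hI3 ?_
      intro ω
      exact key i hi (X ω)
    have heval : ∫ ω, (ε * |fderiv ℝ (fun x => A x i) (X ω) (s (X ω))|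
        - |A (X ω) i| - L * ε ^ 2 / 2) ∂μ
        = ε * ∫ ω, |fderiv ℝ (fun x => A x i) (X ω) (s (X ω))| ∂μ
          - ∫ ω, |A (X ω) i| ∂μ - L * ε ^ 2 / 2 := by
      rw [integral_sub hIa (integrable_const _), integral_sub hIm hI2,
        integral_const_mul, integral_const]
      simp
    rw [heval] at hmono
    have h1 : ε * γ ≤ ε * ∫ ω, |fderiv ℝ (fun x => A x i) (X ω) (s (X ω))| ∂μ :=
      mul_le_mul_of_nonneg_left (hsens i hi) hε.le
    have h2 : ∫ ω, |A (X ω) i| ∂μ ≤ β₀ := hclean i hi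
    have hb : β₀ ≤ ε * γ / 4 := by
      rw [div_le_iff₀ hγ] at hεlo
      linarith
    have hc : L * ε ^ 2 / 2 ≤ ε * γ / 4 := by
      rw [le_div_iff₀ (by positivity)] at hεhi
      nlinarith
    linarith
  -- assemble
  have hIsum : ∀ i : Fin d, Integrable (fun ω => |A (X ω + (-ε) • s (X ω)) i - A' i|) μ :=
    fun i => ((hint3 i).sub (integrable_const _)).abs
  rw [integral_finset_sum _ (fun i _ => hIsum i)]
  have hsub : ∑ i ∈ U, ∫ ω, |A (X ω + (-ε) • s (X ω)) i - A' i| ∂μ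
      ≤ ∑ i : Fin d, ∫ ω, |A (X ω + (-ε) • s (X ω)) i - A' i| ∂μ :=
    Finset.sum_le_sum_of_subset_of_nonneg (Finset.subset_univ U)
      (fun i _ _ => integral_nonneg fun ω => abs_nonneg _)
  have hU : (U.card : ℝ) * (ε * γ / 2)
      ≤ ∑ i ∈ U, ∫ ω, |A (X ω + (-ε) • s (X ω)) i - A' i| ∂μ := by
    have := Finset.card_nsmul_le_sum U
      (fun i => ∫ ω, |A (X ω + (-ε) • s (X ω)) i - A' i| ∂μ) (ε * γ / 2)
      (fun i hi => by
        have hz : A' i = 0 := hA' i (Finset.mem_compl.mp (hUΩ hi))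
        simpa [hz] using hstep i hi)
    simpa [nsmul_eq_mul] using this
  have hcard : η * ((d : ℝ) - Ω.card) * (ε * γ / 2) ≤ (U.card : ℝ) * (ε * γ / 2) :=
    mul_le_mul_of_nonneg_right hUcard (by positivity)
  calc (η * γ / 2) * ε * ((d : ℝ) - Ω.card)
      = η * ((d : ℝ) - Ω.card) * (ε * γ / 2) := by ring
    _ ≤ (U.card : ℝ) * (ε * γ / 2) := hcard
    _ ≤ _ := hU.trans hsub
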